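/- Let μ > 0 and assume the set Z* of Nash equilibria is nonempty. Let F : Δ_m × Δ_n → Δ_m × Δ_n be the map sending a reference profile r to the unique saddle point of the regularized objective f_r. Then for every initial reference r¹ ∈ Δ_m × Δ_n, the sequence r^{n+1} = F(r^n) converges to Z*, i.e. inf_{z* ∈ Z*} ‖r^n − z*‖₂ → 0 as n → ∞. -/

import Mathlib

open Finset

/-- Squared Euclidean norm of a vector in `ℝ^d`. -/
noncomputable def sqnorm {d : ℕ} (v : Fin d → ℝ) : ℝ := ∑ i, (v i) ^ 2

/-- Euclidean norm `‖·‖₂` of a vector in `ℝ^d`. -/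
noncomputable def enorm2 {d : ℕ} (v : Fin d → ℝ) : ℝ := Real.sqrt (sqnorm v)

/-- Euclidean inner product on `ℝ^d`. -/
noncomputable def ip {d : ℕ} (u v : Fin d → ℝ) : ℝ := ∑ i, u i * v i

/-- The max-player's payoff `⟨x, A y⟩` in the two-player zero-sum game with payoff matrix `A`. -/
noncomputable def pay {m n : ℕ} (A : Matrix (Fin m) (Fin n) ℝ)
    (x : Fin m → ℝ) (y : Fin n → ℝ) : ℝ := ip x (A.mulVec y)

/-- `(x, y)` is a Nash equilibrium of the zero-sum game with payoff matrix `A`: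
`⟨x, A y'⟩ ≤ ⟨x, A y⟩ ≤ ⟨x', A y⟩` for all `x' ∈ Δ_m`, `y' ∈ Δ_n`. -/
def IsNE {m n : ℕ} (A : Matrix (Fin m) (Fin n) ℝ)
    (x : Fin m → ℝ) (y : Fin n → ℝ) : Prop :=
  x ∈ stdSimplex ℝ (Fin m) ∧ y ∈ stdSimplex ℝ (Fin n) ∧
  ∀ x' ∈ stdSimplex ℝ (Fin m), ∀ y' ∈ stdSimplex ℝ (Fin n),
    pay A x y' ≤ pay A x y ∧ pay A x y ≤ pay A x' y

/-- The regularized objective `f_r(x,y) = ⟨x, A y⟩ + (μ/2)‖x − r₀‖₂² − (μ/2)‖y − r₁‖₂²`. -/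
noncomputable def freg {m n : ℕ} (A : Matrix (Fin m) (Fin n) ℝ) (μ : ℝ)
    (r₀ : Fin m → ℝ) (r₁ : Fin n → ℝ) (x : Fin m → ℝ) (y : Fin n → ℝ) : ℝ :=
  pay A x y + (μ / 2) * sqnorm (x - r₀) - (μ / 2) * sqnorm (y - r₁)

/-- `(xs, ys)` is a saddle point of `f_r` on `Δ_m × Δ_n`. -/
def IsSaddle {m n : ℕ} (A : Matrix (Fin m) (Fin n) ℝ) (μ : ℝ)
    (r₀ : Fin m → ℝ) (r₁ : Fin n → ℝ) (xs : Fin m → ℝ) (ys : Fin n → ℝ) : Prop :=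
  xs ∈ stdSimplex ℝ (Fin m) ∧ ys ∈ stdSimplex ℝ (Fin n) ∧
  ∀ x ∈ stdSimplex ℝ (Fin m), ∀ y ∈ stdSimplex ℝ (Fin n),
    freg A μ r₀ r₁ xs y ≤ freg A μ r₀ r₁ xs ys ∧
    freg A μ r₀ r₁ xs ys ≤ freg A μ r₀ r₁ x ys

lemma sqnorm_nonneg' {d : ℕ} (v : Fin d → ℝ) : 0 ≤ sqnorm v :=
  Finset.sum_nonneg fun _ _ => sq_nonneg _

lemma sqnorm_zero' {d : ℕ} : sqnorm (0 : Fin d → ℝ) = 0 := by simp [sqnorm]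

lemma sqnorm_comm' {d : ℕ} (a b : Fin d → ℝ) : sqnorm (a - b) = sqnorm (b - a) :=
  Finset.sum_congr rfl fun i _ => by simp [Pi.sub_apply]; ring

lemma sqnorm_expand' {d : ℕ} (a b : Fin d → ℝ) (t : ℝ) :
    sqnorm (a + t • b) = sqnorm a + 2 * t * ip a b + t ^ 2 * sqnorm b := by
  unfold sqnorm ip
  rw [Finset.mul_sum, Finset.mul_sum, ← Finset.sum_add_distrib, ← Finset.sum_add_distrib]
  exact Finset.sum_congr rfl fun i _ => by simp [Pi.add_apply, Pi.smul_apply]; ring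

lemma pay_add_smul_left' {m n : ℕ} (A : Matrix (Fin m) (Fin n) ℝ)
    (x u : Fin m → ℝ) (y : Fin n → ℝ) (t : ℝ) :
    pay A (x + t • u) y = pay A x y + t * pay A u y := by
  unfold pay ip
  rw [Finset.mul_sum, ← Finset.sum_add_distrib]
  exact Finset.sum_congr rfl fun i _ => by simp [Pi.add_apply, Pi.smul_apply]; ring

lemma pay_add_smul_right' {m n : ℕ} (A : Matrix (Fin m) (Fin n) ℝ)
    (x : Fin m → ℝ) (y v : Fin n → ℝ) (t : ℝ) :
    pay A x (y + t • v) = pay A x y + t * pay A x v := by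
  unfold pay ip
  rw [Finset.mul_sum, ← Finset.sum_add_distrib]
  refine Finset.sum_congr rfl fun i _ => ?_
  have h : A.mulVec (y + t • v) i = A.mulVec y i + t * A.mulVec v i := by
    simp [Matrix.mulVec_add, Matrix.mulVec_smul]
  rw [h]; ring

lemma key_quad' (L Q : ℝ) (hQ : 0 ≤ Q)
    (h : ∀ t : ℝ, 0 < t → t ≤ 1 → 0 ≤ t * L + t ^ 2 * Q) : 0 ≤ L := by
  by_contra hL
  push_neg at hL
  rcases eq_or_lt_of_le hQ with hQ0 | hQ0
  · have := h 1 one_pos le_rfl; nlinarith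
  · set t := min 1 (-L / (2 * Q)) with ht
    have htpos : 0 < t := lt_min one_pos (div_pos (by linarith) (by linarith))
    have ht1 : t ≤ 1 := min_le_left _ _
    have htle : t ≤ -L / (2 * Q) := min_le_right _ _
    have h2 : t * Q ≤ -L / 2 := by
      calc t * Q ≤ (-L / (2 * Q)) * Q := by nlinarith
        _ = -L / 2 := by field_simp
    have := h t htpos ht1
    nlinarith

lemma seg_mem' {d : ℕ} {s : Set (Fin d → ℝ)} (hc : Convex ℝ s) {a b : Fin d → ℝ}
    (ha : a ∈ s) (hb : b ∈ s) {t : ℝ} (ht0 : 0 ≤ t) (ht1 : t ≤ 1) :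
    a + t • (b - a) ∈ s := by
  have h := hc ha hb (by linarith : (0:ℝ) ≤ 1 - t) ht0 (by ring)
  have he : a + t • (b - a) = (1 - t) • a + t • b := by
    funext i; simp [Pi.smul_apply, Pi.sub_apply, Pi.add_apply]; ring
  rw [he]; exact h

lemma strong_min' {m n : ℕ} {A : Matrix (Fin m) (Fin n) ℝ} {μ : ℝ} (hμ : 0 < μ)
    {r₀ xs : Fin m → ℝ} {r₁ ys : Fin n → ℝ}
    (hs : IsSaddle A μ r₀ r₁ xs ys) :
    ∀ x ∈ stdSimplex ℝ (Fin m),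
      pay A xs ys + (μ / 2) * sqnorm (xs - r₀) + (μ / 2) * sqnorm (x - xs)
        ≤ pay A x ys + (μ / 2) * sqnorm (x - r₀) := by
  obtain ⟨hxs, hys, hsp⟩ := hs
  intro x hx
  set u := x - xs with hu
  set L := pay A u ys + μ * ip (xs - r₀) u with hL
  set Q := (μ / 2) * sqnorm u with hQ
  have hexp : ∀ t : ℝ, freg A μ r₀ r₁ (xs + t • u) ys
      = freg A μ r₀ r₁ xs ys + t * L + t ^ 2 * Q := by
    intro t
    unfold freg
    have h1 : xs + t • u - r₀ = (xs - r₀) + t • u := by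
      funext i; simp [Pi.add_apply, Pi.sub_apply, Pi.smul_apply]; ring
    rw [pay_add_smul_left', h1, sqnorm_expand', hL, hQ]
    ring
  have hLnn : 0 ≤ L := by
    refine key_quad' L Q (mul_nonneg (by linarith) (sqnorm_nonneg' u)) (fun t ht0 ht1 => ?_)
    have hmem : xs + t • u ∈ stdSimplex ℝ (Fin m) :=
      seg_mem' (convex_stdSimplex ℝ (Fin m)) hxs hx (le_of_lt ht0) ht1
    have h2 := (hsp (xs + t • u) hmem ys hys).2
    rw [hexp t] at h2
    linarith
  have h1 := hexp 1
  have hxu : xs + (1:ℝ) • u = x := by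
    funext i; simp [hu, Pi.add_apply, Pi.smul_apply, Pi.sub_apply]
  rw [hxu] at h1
  have hQd : Q = (μ / 2) * sqnorm (x - xs) := by rw [hQ, hu]
  unfold freg at h1
  rw [one_pow, one_mul] at h1
  linarith [hQd ▸ (le_refl Q)]

lemma strong_max' {m n : ℕ} {A : Matrix (Fin m) (Fin n) ℝ} {μ : ℝ} (hμ : 0 < μ)
    {r₀ xs : Fin m → ℝ} {r₁ ys : Fin n → ℝ}
    (hs : IsSaddle A μ r₀ r₁ xs ys) :
    ∀ y ∈ stdSimplex ℝ (Fin n),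
      pay A xs y + (μ / 2) * sqnorm (ys - r₁) + (μ / 2) * sqnorm (y - ys)
        ≤ pay A xs ys + (μ / 2) * sqnorm (y - r₁) := by
  obtain ⟨hxs, hys, hsp⟩ := hs
  intro y hy
  set v := y - ys with hv
  set L := -(pay A xs v) + μ * ip (ys - r₁) v with hL
  set Q := (μ / 2) * sqnorm v with hQ
  have hexp : ∀ t : ℝ, freg A μ r₀ r₁ xs (ys + t • v)
      = freg A μ r₀ r₁ xs ys - t * L - t ^ 2 * Q := by
    intro t
    unfold freg
    have h1 : ys + t • v - r₁ = (ys - r₁) + t • v := by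
      funext i; simp [Pi.add_apply, Pi.sub_apply, Pi.smul_apply]; ring
    rw [pay_add_smul_right', h1, sqnorm_expand', hL, hQ]
    ring
  have hLnn : 0 ≤ L := by
    refine key_quad' L Q (mul_nonneg (by linarith) (sqnorm_nonneg' v)) (fun t ht0 ht1 => ?_)
    have hmem : ys + t • v ∈ stdSimplex ℝ (Fin n) :=
      seg_mem' (convex_stdSimplex ℝ (Fin n)) hys hy (le_of_lt ht0) ht1
    have h2 := (hsp xs hxs (ys + t • v) hmem).1
    rw [hexp t] at h2
    linarith
  have h1 := hexp 1
  have hyv : ys + (1:ℝ) • v = y := by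
    funext i; simp [hv, Pi.add_apply, Pi.smul_apply, Pi.sub_apply]
  rw [hyv] at h1
  have hQd : Q = (μ / 2) * sqnorm (y - ys) := by rw [hQ, hv]
  unfold freg at h1
  rw [one_pow, one_mul] at h1
  linarith [hQd ▸ (le_refl Q)]

/-- Squared distance on the product space. -/
noncomputable def Dp {m n : ℕ} (a b : (Fin m → ℝ) × (Fin n → ℝ)) : ℝ :=
  sqnorm (a.1 - b.1) + sqnorm (a.2 - b.2)

lemma Dp_nonneg {m n : ℕ} (a b : (Fin m → ℝ) × (Fin n → ℝ)) : 0 ≤ Dp a b :=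
  add_nonneg (sqnorm_nonneg' _) (sqnorm_nonneg' _)

lemma fejer' {m n : ℕ} {A : Matrix (Fin m) (Fin n) ℝ} {μ : ℝ} (hμ : 0 < μ)
    {r₀ xs : Fin m → ℝ} {r₁ ys : Fin n → ℝ}
    (hs : IsSaddle A μ r₀ r₁ xs ys) {z : (Fin m → ℝ) × (Fin n → ℝ)}
    (hz : IsNE A z.1 z.2) :
    (sqnorm (xs - z.1) + sqnorm (ys - z.2)) + (sqnorm (xs - r₀) + sqnorm (ys - r₁))
      ≤ sqnorm (r₀ - z.1) + sqnorm (r₁ - z.2) := by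
  obtain ⟨hz1, hz2, hzp⟩ := hz
  have h1 := strong_min' hμ hs z.1 hz1
  have h2 := strong_max' hμ hs z.2 hz2
  have hne := hzp xs hs.1 ys hs.2.1
  have hkey : (μ / 2) * (sqnorm (xs - r₀) + sqnorm (ys - r₁)
      + sqnorm (z.1 - xs) + sqnorm (z.2 - ys))
      ≤ (μ / 2) * (sqnorm (z.1 - r₀) + sqnorm (z.2 - r₁)) := by
    have hp1 := hne.1
    have hp2 := hne.2
    nlinarith [h1, h2]
  have hdiv : sqnorm (xs - r₀) + sqnorm (ys - r₁) + sqnorm (z.1 - xs) + sqnorm (z.2 - ys)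
      ≤ sqnorm (z.1 - r₀) + sqnorm (z.2 - r₁) :=
    le_of_mul_le_mul_left (by linarith [hkey]) (by linarith : (0:ℝ) < μ / 2)
  have e1 := sqnorm_comm' xs z.1
  have e2 := sqnorm_comm' ys z.2
  have e3 := sqnorm_comm' r₀ z.1
  have e4 := sqnorm_comm' r₁ z.2
  linarith

lemma continuous_sqnorm' {d : ℕ} : Continuous (sqnorm (d := d)) :=
  continuous_finset_sum _ fun i _ => (continuous_apply i).pow 2

lemma continuous_pay' {m n : ℕ} (A : Matrix (Fin m) (Fin n) ℝ) :
    Continuous (fun q : (Fin m → ℝ) × (Fin n → ℝ) => pay A q.1 q.2) := by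
  simp only [pay, ip, Matrix.mulVec, dotProduct]
  exact continuous_finset_sum _ fun i _ =>
    (((continuous_apply i).comp continuous_fst).mul
      (continuous_finset_sum _ fun j _ =>
        continuous_const.mul ((continuous_apply j).comp continuous_snd)))

lemma norm_le_sqrt_sqnorm' {m n : ℕ} (q : (Fin m → ℝ) × (Fin n → ℝ)) :
    ‖q‖ ≤ Real.sqrt (sqnorm q.1 + sqnorm q.2) := by
  have hnn : 0 ≤ Real.sqrt (sqnorm q.1 + sqnorm q.2) := Real.sqrt_nonneg _
  rw [Prod.norm_def]
  refine max_le ?_ ?_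
  · refine (pi_norm_le_iff_of_nonneg hnn).mpr fun i => ?_
    rw [Real.norm_eq_abs, ← Real.sqrt_sq_eq_abs]
    refine Real.sqrt_le_sqrt ?_
    have h2 : (q.1 i) ^ 2 ≤ sqnorm q.1 :=
      Finset.single_le_sum (f := fun j => (q.1 j) ^ 2) (fun j _ => sq_nonneg _) (Finset.mem_univ i)
    linarith [sqnorm_nonneg' q.2]
  · refine (pi_norm_le_iff_of_nonneg hnn).mpr fun i => ?_
    rw [Real.norm_eq_abs, ← Real.sqrt_sq_eq_abs]
    refine Real.sqrt_le_sqrt ?_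
    have h2 : (q.2 i) ^ 2 ≤ sqnorm q.2 :=
      Finset.single_le_sum (f := fun j => (q.2 j) ^ 2) (fun j _ => sq_nonneg _) (Finset.mem_univ i)
    linarith [sqnorm_nonneg' q.1]

/-- if the set `Z*` of Nash equilibria is nonempty and `F` maps each reference
profile `r ∈ Δ_m × Δ_n` to the (unique) saddle point of the regularized objective `f_r`, then
for every initial reference `r¹ ∈ Δ_m × Δ_n` the sequence `r^{n+1} = F(r^n)` converges to `Z*`:
`inf_{z* ∈ Z*} ‖r^n − z*‖₂ → 0`. -/
theorem rt_reference_sequence_converges_to_NE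
    (m n : ℕ) (hm : 1 ≤ m) (hn : 1 ≤ n) (A : Matrix (Fin m) (Fin n) ℝ)
    (μ : ℝ) (hμ : 0 < μ)
    (hNEne : ∃ p : (Fin m → ℝ) × (Fin n → ℝ), IsNE A p.1 p.2)
    (F : (Fin m → ℝ) × (Fin n → ℝ) → (Fin m → ℝ) × (Fin n → ℝ))
    (hF : ∀ p ∈ stdSimplex ℝ (Fin m) ×ˢ stdSimplex ℝ (Fin n),
      IsSaddle A μ p.1 p.2 (F p).1 (F p).2)
    (r1 : (Fin m → ℝ) × (Fin n → ℝ))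
    (hr1 : r1 ∈ stdSimplex ℝ (Fin m) ×ˢ stdSimplex ℝ (Fin n))
    (seq : ℕ → (Fin m → ℝ) × (Fin n → ℝ))
    (hseq0 : seq 0 = r1)
    (hseqrec : ∀ k, seq (k + 1) = F (seq k)) :
    Filter.Tendsto
      (fun k => sInf ((fun z : (Fin m → ℝ) × (Fin n → ℝ) =>
        Real.sqrt (sqnorm ((seq k).1 - z.1) + sqnorm ((seq k).2 - z.2))) ''
        {p | IsNE A p.1 p.2}))
      Filter.atTop (nhds 0) := by
  classical
  obtain ⟨z0, hz0⟩ := hNEne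
  have hK : ∀ k, seq k ∈ stdSimplex ℝ (Fin m) ×ˢ stdSimplex ℝ (Fin n) := by
    intro k
    induction k with
    | zero => rw [hseq0]; exact hr1
    | succ k ih =>
        rw [hseqrec k]
        have h := hF (seq k) ih
        exact Set.mem_prod.mpr ⟨h.1, h.2.1⟩
  have hsad : ∀ k, IsSaddle A μ (seq k).1 (seq k).2 (seq (k+1)).1 (seq (k+1)).2 := by
    intro k; rw [hseqrec k]; exact hF (seq k) (hK k)
  have hfej : ∀ k, ∀ z : (Fin m → ℝ) × (Fin n → ℝ), IsNE A z.1 z.2 →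
      Dp (seq (k+1)) z + Dp (seq (k+1)) (seq k) ≤ Dp (seq k) z := by
    intro k z hz
    have h := fejer' hμ (hsad k) hz
    simpa [Dp] using h
  set a : ℕ → ℝ := fun k => Dp (seq k) z0 with haDef
  have ha_succ : ∀ k, a (k+1) + Dp (seq (k+1)) (seq k) ≤ a k := fun k => hfej k z0 hz0
  have ha_anti : Antitone a := antitone_nat_of_succ_le fun k => by
    have h1 := ha_succ k
    have h2 := Dp_nonneg (seq (k+1)) (seq k)
    linarith
  have ha_bdd : BddBelow (Set.range a) := ⟨0, by rintro x ⟨k, rfl⟩; exact Dp_nonneg _ _⟩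
  have ha_lim : Filter.Tendsto a Filter.atTop (nhds (⨅ k, a k)) :=
    tendsto_atTop_ciInf ha_anti ha_bdd
  have ha_lim' : Filter.Tendsto (fun k => a (k+1)) Filter.atTop (nhds (⨅ k, a k)) :=
    ha_lim.comp (Filter.tendsto_add_atTop_nat 1)
  have hdiff : Filter.Tendsto (fun k => a k - a (k+1)) Filter.atTop (nhds 0) := by
    simpa using ha_lim.sub ha_lim'
  have hD0 : Filter.Tendsto (fun k => Dp (seq (k+1)) (seq k)) Filter.atTop (nhds 0) :=
    tendsto_of_tendsto_of_tendsto_of_le_of_le tendsto_const_nhds hdiff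
      (fun k => Dp_nonneg _ _) (fun k => by have := ha_succ k; linarith)
  have hKc : IsCompact (stdSimplex ℝ (Fin m) ×ˢ stdSimplex ℝ (Fin n)) :=
    (isCompact_stdSimplex _ _).prod (isCompact_stdSimplex _ _)
  obtain ⟨p, hpK, φ, hφ, hφt⟩ := hKc.tendsto_subseq hK
  have hwD : Filter.Tendsto (fun k => Dp (seq (φ k + 1)) (seq (φ k))) Filter.atTop (nhds 0) :=
    hD0.comp hφ.tendsto_atTop
  have hwdist : Filter.Tendsto (fun k => dist (seq (φ k + 1)) (seq (φ k)))
      Filter.atTop (nhds 0) := by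
    have hsq : Filter.Tendsto (fun k => Real.sqrt (Dp (seq (φ k + 1)) (seq (φ k))))
        Filter.atTop (nhds 0) := by
      have h := (Real.continuous_sqrt.tendsto 0).comp hwD
      simpa [Function.comp_def] using h
    refine tendsto_of_tendsto_of_tendsto_of_le_of_le tendsto_const_nhds hsq
      (fun k => dist_nonneg) (fun k => ?_)
    rw [dist_eq_norm]
    have h := norm_le_sqrt_sqnorm' (seq (φ k + 1) - seq (φ k))
    simpa [Dp, Prod.fst_sub, Prod.snd_sub] using h
  have hw : Filter.Tendsto (fun k => seq (φ k + 1)) Filter.atTop (nhds p) := by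
    rw [tendsto_iff_dist_tendsto_zero]
    have h1 : Filter.Tendsto (fun k => dist (seq (φ k)) p) Filter.atTop (nhds 0) :=
      tendsto_iff_dist_tendsto_zero.mp hφt
    refine tendsto_of_tendsto_of_tendsto_of_le_of_le tendsto_const_nhds
      (by simpa using hwdist.add h1) (fun k => dist_nonneg)
      (fun k => dist_triangle _ _ _)
  have hw1 : Filter.Tendsto (fun k => (seq (φ k + 1)).1) Filter.atTop (nhds p.1) :=
    (continuous_fst.tendsto p).comp hw
  have hw2 : Filter.Tendsto (fun k => (seq (φ k + 1)).2) Filter.atTop (nhds p.2) :=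
    (continuous_snd.tendsto p).comp hw
  have hs1 : Filter.Tendsto (fun k => (seq (φ k)).1) Filter.atTop (nhds p.1) :=
    (continuous_fst.tendsto p).comp hφt
  have hs2 : Filter.Tendsto (fun k => (seq (φ k)).2) Filter.atTop (nhds p.2) :=
    (continuous_snd.tendsto p).comp hφt
  have hpayc := continuous_pay' A
  have hpayw : Filter.Tendsto (fun k => pay A (seq (φ k + 1)).1 (seq (φ k + 1)).2)
      Filter.atTop (nhds (pay A p.1 p.2)) := (hpayc.tendsto p).comp hw
  have hpNE : IsNE A p.1 p.2 := by
    refine ⟨hpK.1, hpK.2, fun x' hx' y' hy' => ?_⟩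
    constructor
    · have hineq : ∀ k,
          pay A (seq (φ k + 1)).1 y' + (μ / 2) * sqnorm ((seq (φ k + 1)).2 - (seq (φ k)).2)
            + (μ / 2) * sqnorm (y' - (seq (φ k + 1)).2)
          ≤ pay A (seq (φ k + 1)).1 (seq (φ k + 1)).2
            + (μ / 2) * sqnorm (y' - (seq (φ k)).2) :=
        fun k => strong_max' hμ (hsad (φ k)) y' hy'
      have t1 : Filter.Tendsto (fun k => pay A (seq (φ k + 1)).1 y')
          Filter.atTop (nhds (pay A p.1 y')) := by
        have hc : Continuous (fun x : Fin m → ℝ => pay A x y') :=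
          hpayc.comp (continuous_id.prodMk continuous_const)
        exact (hc.tendsto p.1).comp hw1
      have t2 : Filter.Tendsto (fun k => sqnorm ((seq (φ k + 1)).2 - (seq (φ k)).2))
          Filter.atTop (nhds 0) := by
        have h := (continuous_sqnorm'.tendsto (p.2 - p.2)).comp (hw2.sub hs2)
        simpa [sub_self, sqnorm, Function.comp_def] using h
      have t3 : Filter.Tendsto (fun k => sqnorm (y' - (seq (φ k + 1)).2))
          Filter.atTop (nhds (sqnorm (y' - p.2))) :=
        (continuous_sqnorm'.tendsto _).comp (tendsto_const_nhds.sub hw2)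
      have t4 : Filter.Tendsto (fun k => sqnorm (y' - (seq (φ k)).2))
          Filter.atTop (nhds (sqnorm (y' - p.2))) :=
        (continuous_sqnorm'.tendsto _).comp (tendsto_const_nhds.sub hs2)
      have hlim := le_of_tendsto_of_tendsto'
        ((t1.add (t2.const_mul (μ / 2))).add (t3.const_mul (μ / 2)))
        (hpayw.add (t4.const_mul (μ / 2))) hineq
      have hμ2 : (μ / 2) * (0:ℝ) = 0 := mul_zero _
      linarith [hlim]
    · have hineq : ∀ k,
          pay A (seq (φ k + 1)).1 (seq (φ k + 1)).2
            + (μ / 2) * sqnorm ((seq (φ k + 1)).1 - (seq (φ k)).1)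
            + (μ / 2) * sqnorm (x' - (seq (φ k + 1)).1)
          ≤ pay A x' (seq (φ k + 1)).2 + (μ / 2) * sqnorm (x' - (seq (φ k)).1) :=
        fun k => strong_min' hμ (hsad (φ k)) x' hx'
      have t1 : Filter.Tendsto (fun k => pay A x' (seq (φ k + 1)).2)
          Filter.atTop (nhds (pay A x' p.2)) := by
        have hc : Continuous (fun y : Fin n → ℝ => pay A x' y) :=
          hpayc.comp (continuous_const.prodMk continuous_id)
        exact (hc.tendsto p.2).comp hw2
      have t2 : Filter.Tendsto (fun k => sqnorm ((seq (φ k + 1)).1 - (seq (φ k)).1))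
          Filter.atTop (nhds 0) := by
        have h := (continuous_sqnorm'.tendsto (p.1 - p.1)).comp (hw1.sub hs1)
        simpa [sub_self, sqnorm, Function.comp_def] using h
      have t3 : Filter.Tendsto (fun k => sqnorm (x' - (seq (φ k + 1)).1))
          Filter.atTop (nhds (sqnorm (x' - p.1))) :=
        (continuous_sqnorm'.tendsto _).comp (tendsto_const_nhds.sub hw1)
      have t4 : Filter.Tendsto (fun k => sqnorm (x' - (seq (φ k)).1))
          Filter.atTop (nhds (sqnorm (x' - p.1))) :=
        (continuous_sqnorm'.tendsto _).comp (tendsto_const_nhds.sub hs1)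
      have hlim := le_of_tendsto_of_tendsto'
        ((hpayw.add (t2.const_mul (μ / 2))).add (t3.const_mul (μ / 2)))
        (t1.add (t4.const_mul (μ / 2))) hineq
      linarith [hlim]
  -- final: distance to the NE set tends to 0
  show Filter.Tendsto (fun k => sInf ((fun z : (Fin m → ℝ) × (Fin n → ℝ) =>
      Real.sqrt (Dp (seq k) z)) '' {p | IsNE A p.1 p.2})) Filter.atTop (nhds 0)
  set Z : Set ((Fin m → ℝ) × (Fin n → ℝ)) := {p | IsNE A p.1 p.2} with hZ
  set dd : ℕ → ℝ := fun k => sInf ((fun z : (Fin m → ℝ) × (Fin n → ℝ) =>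
      Real.sqrt (Dp (seq k) z)) '' Z) with hdd
  have hZne : Z.Nonempty := ⟨z0, hz0⟩
  have hSne : ∀ k, ((fun z : (Fin m → ℝ) × (Fin n → ℝ) =>
      Real.sqrt (Dp (seq k) z)) '' Z).Nonempty := fun k => hZne.image _
  have hSb : ∀ k, BddBelow ((fun z : (Fin m → ℝ) × (Fin n → ℝ) =>
      Real.sqrt (Dp (seq k) z)) '' Z) := by
    intro k
    refine ⟨0, ?_⟩
    rintro x ⟨z, hz, rfl⟩
    exact Real.sqrt_nonneg _
  have hdd_nonneg : ∀ k, 0 ≤ dd k := by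
    intro k
    refine Real.sInf_nonneg ?_
    rintro x ⟨z, hz, rfl⟩
    exact Real.sqrt_nonneg _
  have hdd_anti : Antitone dd := by
    refine antitone_nat_of_succ_le fun k => ?_
    refine le_csInf (hSne k) ?_
    rintro b ⟨z, hz, rfl⟩
    have h1 : dd (k+1) ≤ Real.sqrt (Dp (seq (k+1)) z) :=
      csInf_le (hSb (k+1)) ⟨z, hz, rfl⟩
    refine h1.trans (Real.sqrt_le_sqrt ?_)
    have h2 := hfej k z hz
    have h3 := Dp_nonneg (seq (k+1)) (seq k)
    linarith
  have hdd_bdd : BddBelow (Set.range dd) := ⟨0, by rintro x ⟨k, rfl⟩; exact hdd_nonneg k⟩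
  have hdd_lim : Filter.Tendsto dd Filter.atTop (nhds (⨅ k, dd k)) :=
    tendsto_atTop_ciInf hdd_anti hdd_bdd
  have hdd_sub : Filter.Tendsto (fun k => dd (φ k)) Filter.atTop (nhds (⨅ k, dd k)) :=
    hdd_lim.comp hφ.tendsto_atTop
  have hdp0 : Filter.Tendsto (fun k => Real.sqrt (Dp (seq (φ k)) p)) Filter.atTop (nhds 0) := by
    have hc : Continuous (fun q : (Fin m → ℝ) × (Fin n → ℝ) => Real.sqrt (Dp q p)) := by
      refine Real.continuous_sqrt.comp ?_
      exact (continuous_sqnorm'.comp (continuous_fst.sub continuous_const)).add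
        (continuous_sqnorm'.comp (continuous_snd.sub continuous_const))
    have h := (hc.tendsto p).comp hφt
    simpa [Dp, sub_self, sqnorm, Function.comp_def] using h
  have hdd_sub0 : Filter.Tendsto (fun k => dd (φ k)) Filter.atTop (nhds 0) := by
    refine tendsto_of_tendsto_of_tendsto_of_le_of_le tendsto_const_nhds hdp0
      (fun k => hdd_nonneg _) (fun k => ?_)
    exact csInf_le (hSb (φ k)) ⟨p, hpNE, rfl⟩
  have hinf0 : (⨅ k, dd k) = 0 := tendsto_nhds_unique hdd_sub hdd_sub0
  rw [← hinf0]
  exact hdd_lim
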